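/- Let p be a prime, a ≥ 1 an integer, and A a commutative ring with p^a·A = 0. Let q ≥ 2 be an integer and let φ : A((u)) → A((u)) be a ring endomorphism such that φ(u) ∈ u^q + p·A((u)). Then for every real number λ with 1 < λ < q, φ is locally contracting with contracting factor λ: there exists an integer N such that φ(u^n) ∈ u^{⌊λn⌋}·A[[u]] for all integers n > N. -/

import Mathlib

noncomputable def uvar (A : Type*) [CommRing A] : LaurentSeries A :=
  HahnSeries.single (1 : ℤ) (1 : A)

open HahnSeries PowerSeries in
lemma uvar_pow_eq_of (A : Type*) [CommRing A] (t : ℕ) :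
    uvar A ^ t = ofPowerSeries ℤ A (X ^ t) := by
  rw [map_pow, ofPowerSeries_X]; rfl

open HahnSeries in
lemma sum_factor {A : Type*} [CommRing A] {ι : Type*} (s : Finset ι)
    (f : ι → LaurentSeries A) (c : LaurentSeries A)
    (h : ∀ i ∈ s, ∃ g : PowerSeries A, f i = c * ofPowerSeries ℤ A g) :
    ∃ g : PowerSeries A, ∑ i ∈ s, f i = c * ofPowerSeries ℤ A g := by
  classical
  induction s using Finset.cons_induction with
  | empty => exact ⟨0, by simp⟩
  | cons i s hi ih =>
    obtain ⟨g1, hg1⟩ := h i (Finset.mem_cons_self i s)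
    obtain ⟨g2, hg2⟩ := ih fun j hj => h j (Finset.mem_cons_of_mem hj)
    exact ⟨g1 + g2, by rw [Finset.sum_cons, hg1, hg2, map_add, mul_add]⟩

theorem locally_contracting_of_deformed_frobenius
    {p a : ℕ} (hp : p.Prime) (ha : 1 ≤ a)
    {A : Type*} [CommRing A] (hpa : (p : A) ^ a = 0)
    {q : ℕ} (hq : 2 ≤ q)
    (φ : LaurentSeries A →+* LaurentSeries A)
    (hφu : ∃ y : LaurentSeries A, φ (uvar A) = uvar A ^ q + (p : LaurentSeries A) * y) :
    ∀ lam : ℝ, 1 < lam → lam < q →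
      ∃ N : ℕ, ∀ n : ℕ, N < n →
        ∃ g : PowerSeries A,
          φ (uvar A ^ n) = uvar A ^ ⌊lam * (n : ℝ)⌋₊ * HahnSeries.ofPowerSeries ℤ A g := by
  classical
  open HahnSeries PowerSeries in
  intro lam hlam1 hlamq
  obtain ⟨y, hy⟩ := hφu
  -- p vanishes to the a-th power in the Laurent series ring
  have hpL : (p : LaurentSeries A) ^ a = 0 := by
    rw [← map_natCast (HahnSeries.C : A →+* LaurentSeries A) p, ← map_pow, hpa, map_zero]
  -- write u^m * y as a power series
  set m : ℕ := (-y.order).toNat with hm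
  have hmo : (0:ℤ) ≤ (m : ℤ) + y.order := by
    have := Int.self_le_toNat (-y.order)
    omega
  obtain ⟨g0, hg0⟩ : ∃ g0 : PowerSeries A,
      uvar A ^ m * y = HahnSeries.ofPowerSeries ℤ A g0 := by
    refine ⟨X ^ ((m : ℤ) + y.order).toNat * y.powerSeriesPart, ?_⟩
    conv_lhs => rw [← y.single_order_mul_powerSeriesPart]
    rw [map_mul, ← uvar_pow_eq_of, uvar, single_pow, ← mul_assoc, single_mul_single,
      single_pow]
    simp only [nsmul_eq_mul, mul_one, one_pow, one_mul]
    rw [Int.toNat_of_nonneg hmo]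
  set c : ℕ := (q + m) * (a - 1) with hc
  refine ⟨⌈(c : ℝ) / (q - lam)⌉₊, ?_⟩
  intro n hn
  set D : ℕ := ⌊lam * (n : ℝ)⌋₊ with hD
  have hqlam : (0:ℝ) < q - lam := by linarith
  -- key inequality
  have hkey : ∀ k : ℕ, k < a → D + (q + m) * k ≤ q * n := by
    intro k hk
    have h1 : (c : ℝ) / (q - lam) < n := by
      calc (c : ℝ) / (q - lam) ≤ ⌈(c : ℝ) / (q - lam)⌉₊ := Nat.le_ceil _
        _ < n := by exact_mod_cast hn
    have h2 : (c : ℝ) < (q - lam) * n := by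
      rw [div_lt_iff₀ hqlam] at h1; linarith [h1]
    have h3 : (D : ℝ) ≤ lam * n := Nat.floor_le (by positivity)
    have h4 : ((q + m) * k : ℕ) ≤ c := by
      apply Nat.mul_le_mul_left; omega
    rw [← Nat.cast_le (α := ℝ)]
    push_cast
    have h5 : ((q + m) * k : ℝ) ≤ (c : ℝ) := by exact_mod_cast h4
    push_cast at h5
    nlinarith
  rw [map_pow, hy]
  have hbin : (uvar A ^ q + (p : LaurentSeries A) * y) ^ n
      = ∑ k ∈ Finset.range (n + 1),
        ((p : LaurentSeries A) * y) ^ k * (uvar A ^ q) ^ (n - k) * (n.choose k : LaurentSeries A) := by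
    rw [add_comm, add_pow]
  rw [hbin]
  apply sum_factor
  intro k hk
  have hkn : k ≤ n := by
    simp only [Finset.mem_range] at hk; omega
  by_cases hka : a ≤ k
  · refine ⟨0, ?_⟩
    have : ((p : LaurentSeries A) * y) ^ k = 0 := by
      rw [← Nat.add_sub_cancel' hka, _root_.pow_add, mul_pow, hpL]
      ring
    rw [this, map_zero]
    ring
  · push_neg at hka
    have hkey' := hkey k hka
    have hsub : q * (n - k) + q * k = q * n := by
      rw [← Nat.mul_add, Nat.sub_add_cancel hkn]
    have hdist : (q + m) * k = q * k + m * k := Nat.add_mul q m k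
    have hle : D + m * k ≤ q * (n - k) := by omega
    set e : ℕ := q * (n - k) - (D + m * k) with he
    have hexp : q * (n - k) = D + e + m * k := by omega
    refine ⟨X ^ e * g0 ^ k * (p : PowerSeries A) ^ k * (n.choose k : PowerSeries A), ?_⟩
    have hu : HahnSeries.ofPowerSeries ℤ A X = uvar A := HahnSeries.ofPowerSeries_X
    simp only [map_mul, map_pow, map_natCast, hu, ← hg0]
    rw [mul_pow, mul_pow, ← pow_mul, ← pow_mul, hexp, _root_.pow_add, _root_.pow_add]
    ring
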